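/- Assume items are sorted so that c̄ is non-decreasing, and let I = {j_1 < j_2 < ... < j_Γ} ⊆ [n] be a query set with exactly Γ elements (listed in increasing order of c̄), where |I| = Γ < n. Then Ψ(I) = min{ min_{j∈[n]} (c̄_j + ĉ_j), max{ min_{j ∈ [n]\I} c̄_j, c̄_{j_Γ} } }. -/

import Mathlib

open Finset

/-- The DDID value of query set `I` for the 1-selection problem with objective uncertainty. -/
noncomputable def Psi (n Γ : ℕ) (cbar chat : Fin n → ℝ) (I : Finset (Fin n)) : ℝ :=
  ⨆ γ : {γ : Fin n → Bool // (Finset.univ.filter (fun i => γ i = true)).card ≤ Γ},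
    ⨅ j : Fin n,
      ⨆ δ : {δ : Fin n → Bool //
          (Finset.univ.filter (fun i => δ i = true)).card ≤ Γ ∧ ∀ i ∈ I, δ i = γ.1 i},
        cbar j + (if δ.1 j = true then chat j else 0)

theorem stmt2 (n Γ : ℕ) (hΓ : 1 ≤ Γ) (hΓn : Γ < n) (cbar chat : Fin n → ℝ)
    (hchat : ∀ j, 0 ≤ chat j) (hmono : Monotone cbar)
    (I : Finset (Fin n)) (hcard : I.card = Γ) :
    Psi n Γ cbar chat I =
      min
        (Finset.univ.inf'
          (Finset.univ_nonempty_iff.mpr (Fin.pos_iff_nonempty.mp (by omega)))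
          (fun j => cbar j + chat j))
        (max
          (Iᶜ.inf' (Finset.card_pos.mp
            (by rw [Finset.card_compl, hcard, Fintype.card_fin]; omega)) cbar)
          (cbar (I.max' (Finset.card_pos.mp (by rw [hcard]; omega))))) := by
  classical
  have hI : I.Nonempty := Finset.card_pos.mp (by rw [hcard]; omega)
  have hIc : Iᶜ.Nonempty := Finset.card_pos.mp
    (by rw [Finset.card_compl, hcard, Fintype.card_fin]; omega)
  have huniv : (Finset.univ : Finset (Fin n)).Nonempty :=
    Finset.univ_nonempty_iff.mpr (Fin.pos_iff_nonempty.mp (by omega))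
  show Psi n Γ cbar chat I =
      min (Finset.univ.inf' huniv (fun j => cbar j + chat j))
        (max (Iᶜ.inf' hIc cbar) (cbar (I.max' hI)))
  set jG := I.max' hI with hjGdef
  have hjGmem : jG ∈ I := I.max'_mem hI
  set M := Finset.univ.inf' huniv (fun j => cbar j + chat j) with hMdef
  set m := Iᶜ.inf' hIc cbar with hmdef
  set K := cbar jG with hKdef
  have hMle : ∀ j, M ≤ cbar j + chat j := fun j => Finset.inf'_le _ (mem_univ j)
  have hmle : ∀ j ∉ I, m ≤ cbar j := fun j hj =>
    Finset.inf'_le _ (Finset.mem_compl.mpr hj)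
  have hKle : ∀ j ∈ I, cbar j ≤ K := fun j hj => hmono (I.le_max' j hj)
  -- the element of Iᶜ attaining m
  obtain ⟨j0, hj0, hj0e⟩ := Finset.exists_mem_eq_inf' hIc cbar
  have hj0I : j0 ∉ I := Finset.mem_compl.mp hj0
  -- nonemptiness of the δ-index type
  have hne : ∀ γ : {γ : Fin n → Bool //
      (Finset.univ.filter (fun i => γ i = true)).card ≤ Γ},
      Nonempty {δ : Fin n → Bool //
        (Finset.univ.filter (fun i => δ i = true)).card ≤ Γ ∧ ∀ i ∈ I, δ i = γ.1 i} := by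
    intro γ
    refine ⟨⟨fun i => γ.1 i && decide (i ∈ I), ?_, ?_⟩⟩
    · calc (Finset.univ.filter (fun i => (γ.1 i && decide (i ∈ I)) = true)).card
          ≤ I.card := by
            apply Finset.card_le_card
            intro i hi
            simp only [Finset.mem_filter, Bool.and_eq_true, decide_eq_true_eq] at hi
            exact hi.2.2
        _ ≤ Γ := by rw [hcard]
    · intro i hi; simp [hi]
  have bddδ : ∀ (γ : {γ : Fin n → Bool //
      (Finset.univ.filter (fun i => γ i = true)).card ≤ Γ}) (j : Fin n),
      BddAbove (Set.range (fun δ : {δ : Fin n → Bool //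
        (Finset.univ.filter (fun i => δ i = true)).card ≤ Γ ∧ ∀ i ∈ I, δ i = γ.1 i} =>
        cbar j + (if δ.1 j = true then chat j else 0))) :=
    fun γ j => Set.Finite.bddAbove (Set.finite_range _)
  have bddι : ∀ (γ : {γ : Fin n → Bool //
      (Finset.univ.filter (fun i => γ i = true)).card ≤ Γ}),
      BddBelow (Set.range (fun j : Fin n =>
        ⨆ δ : {δ : Fin n → Bool //
          (Finset.univ.filter (fun i => δ i = true)).card ≤ Γ ∧ ∀ i ∈ I, δ i = γ.1 i},
        cbar j + (if δ.1 j = true then chat j else 0))) :=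
    fun γ => Set.Finite.bddBelow (Set.finite_range _)
  have bddγ : BddAbove (Set.range (fun γ : {γ : Fin n → Bool //
      (Finset.univ.filter (fun i => γ i = true)).card ≤ Γ} =>
      ⨅ j : Fin n,
        ⨆ δ : {δ : Fin n → Bool //
          (Finset.univ.filter (fun i => δ i = true)).card ≤ Γ ∧ ∀ i ∈ I, δ i = γ.1 i},
        cbar j + (if δ.1 j = true then chat j else 0))) :=
    Set.Finite.bddAbove (Set.finite_range _)
  haveI : Nonempty (Fin n) := Fin.pos_iff_nonempty.mp (by omega)
  rw [Psi]
  apply le_antisymm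
  · -- upper bound
    haveI : Nonempty {γ : Fin n → Bool //
        (Finset.univ.filter (fun i => γ i = true)).card ≤ Γ} :=
      ⟨⟨fun _ => false, by simp⟩⟩
    apply ciSup_le
    intro γ
    haveI := hne γ
    apply le_min
    · -- ≤ M
      rw [hMdef]
      apply Finset.le_inf'
      intro j _
      refine le_trans (ciInf_le (bddι γ) j) (ciSup_le ?_)
      intro δ
      apply add_le_add (le_refl _)
      split
      · exact le_refl _
      · exact hchat j
    · -- ≤ max m K
      by_cases hall : ∀ i ∈ I, γ.1 i = true
      · -- γ is true on all of I: value at j0 is cbar j0 = m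
        refine le_trans (ciInf_le (bddι γ) j0) (le_trans (ciSup_le ?_) (le_max_left _ _))
        intro δ
        have hδI : ∀ i ∈ I, δ.1 i = true := fun i hi => (δ.2.2 i hi).trans (hall i hi)
        have hδj0 : δ.1 j0 = false := by
          by_contra h
          have hj0t : δ.1 j0 = true := by
            cases h' : δ.1 j0 with
            | false => exact absurd h' h
            | true => rfl
          have hsub : insert j0 I ⊆ Finset.univ.filter (fun i => δ.1 i = true) := by
            intro i hi
            rcases Finset.mem_insert.mp hi with h1 | h1
            · subst h1; simp [hj0t]
            · simp [hδI i h1]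
          have := Finset.card_le_card hsub
          rw [Finset.card_insert_of_notMem hj0I, hcard] at this
          omega
        rw [hδj0]
        simp only [Bool.false_eq_true, if_false, add_zero]
        rw [hmdef, hj0e]
      · -- some i ∈ I has γ i = false: value at i is cbar i ≤ K
        push_neg at hall
        obtain ⟨i, hiI, hiF⟩ := hall
        have hiF' : γ.1 i = false := by
          cases h' : γ.1 i with
          | false => rfl
          | true => exact absurd h' hiF
        refine le_trans (ciInf_le (bddι γ) i) (le_trans (ciSup_le ?_) (le_max_right _ _))
        intro δ
        have : δ.1 i = false := (δ.2.2 i hiI).trans hiF'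
        rw [this]
        simp only [Bool.false_eq_true, if_false, add_zero]
        exact hKle i hiI
  · -- lower bound
    rw [min_max_distrib_left]
    apply max_le
    · -- min M m ≤ Psi, witness γ = indicator of I
      have hfilt : (Finset.univ.filter (fun i => (decide (i ∈ I)) = true)) = I := by
        ext i; simp
      set γ1 : {γ : Fin n → Bool //
          (Finset.univ.filter (fun i => γ i = true)).card ≤ Γ} :=
        ⟨fun i => decide (i ∈ I), by rw [hfilt, hcard]⟩ with hγ1
      refine le_trans ?_ (le_ciSup bddγ γ1)
      apply le_ciInf
      intro j
      by_cases hj : j ∈ I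
      · refine le_trans (min_le_left _ _) (le_trans (hMle j) ?_)
        refine le_trans ?_ (le_ciSup (bddδ γ1 j) ⟨fun i => decide (i ∈ I), by
          rw [hfilt, hcard], fun i _ => rfl⟩)
        simp [hj]
      · refine le_trans (min_le_right _ _) (le_trans (hmle j hj) ?_)
        refine le_trans ?_ (le_ciSup (bddδ γ1 j) ⟨fun i => decide (i ∈ I), by
          rw [hfilt, hcard], fun i _ => rfl⟩)
        simp [hj]
    · -- min M K ≤ Psi, witness γ = indicator of I.erase jG
      have hfilt : (Finset.univ.filter (fun i => (decide (i ∈ I.erase jG)) = true))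
          = I.erase jG := by ext i; simp
      have hcarde : (I.erase jG).card = Γ - 1 := by
        rw [Finset.card_erase_of_mem hjGmem, hcard]
      set γ2 : {γ : Fin n → Bool //
          (Finset.univ.filter (fun i => γ i = true)).card ≤ Γ} :=
        ⟨fun i => decide (i ∈ I.erase jG), by rw [hfilt, hcarde]; omega⟩ with hγ2
      refine le_trans ?_ (le_ciSup bddγ γ2)
      apply le_ciInf
      intro j
      by_cases hj : j ∈ I
      · by_cases hjG : j = jG
        · -- value ≥ cbar jG = K
          refine le_trans (min_le_right _ _) ?_
          refine le_trans ?_ (le_ciSup (bddδ γ2 j) ⟨fun i => decide (i ∈ I.erase jG), by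
            rw [hfilt, hcarde]; omega, fun i _ => rfl⟩)
          subst hjG
          simp [hKdef]
        · refine le_trans (min_le_left _ _) (le_trans (hMle j) ?_)
          refine le_trans ?_ (le_ciSup (bddδ γ2 j) ⟨fun i => decide (i ∈ I.erase jG), by
            rw [hfilt, hcarde]; omega, fun i _ => rfl⟩)
          have : j ∈ I.erase jG := Finset.mem_erase.mpr ⟨hjG, hj⟩
          simp [this]
      · -- j ∉ I : use δ = indicator of insert j (I.erase jG)
        have hjne : j ∉ I.erase jG := fun h => hj (Finset.mem_of_mem_erase h)
        have hfilt2 : (Finset.univ.filter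
            (fun i => (decide (i ∈ insert j (I.erase jG))) = true))
            = insert j (I.erase jG) := by ext i; simp
        have hcard2 : (insert j (I.erase jG)).card ≤ Γ := by
          rw [Finset.card_insert_of_notMem hjne, hcarde]; omega
        have hagree : ∀ i ∈ I, (fun i => decide (i ∈ insert j (I.erase jG))) i = γ2.1 i := by
          intro i hi
          have : i ≠ j := fun h => hj (h ▸ hi)
          simp only [hγ2]
          simp [Finset.mem_insert, this]
        refine le_trans (min_le_left _ _) (le_trans (hMle j) ?_)
        refine le_trans ?_ (le_ciSup (bddδ γ2 j) ⟨fun i => decide (i ∈ insert j (I.erase jG)),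
          by rw [hfilt2]; exact hcard2, hagree⟩)
        simp [Finset.mem_insert]
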